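/- In the quotient ring H = ℂ[x,y]/⟨xy, x - 3y^3⟩, the images of 1, y, y^2, y^3 form a ℂ-basis; in particular H has dimension 4 over ℂ. -/

import Mathlib

open MvPolynomial

noncomputable section

private abbrev f4 : Polynomial ℂ := Polynomial.X ^ 4

private lemma f4_monic : f4.Monic := Polynomial.monic_X_pow 4

/-- In `H = ℂ[x,y]/⟨xy, x - 3y³⟩`, the images of `1, y, y², y³` form a `ℂ`-basis;
in particular `H` is 4-dimensional over `ℂ`. -/
theorem orbifold_cohomology_basis :
    let I : Ideal (MvPolynomial (Fin 2) ℂ) :=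
      Ideal.span {X 0 * X 1, X 0 - 3 * (X 1) ^ 3}
    (∃ B : Module.Basis (Fin 4) ℂ (MvPolynomial (Fin 2) ℂ ⧸ I),
      ∀ i : Fin 4, B i = Ideal.Quotient.mk I ((X 1) ^ (i : ℕ))) ∧
    Module.finrank ℂ (MvPolynomial (Fin 2) ℂ ⧸ I) = 4 := by
  intro I
  -- generators
  have ha : X 0 * X 1 ∈ I := Ideal.subset_span (Or.inl rfl)
  have hb : X 0 - 3 * (X 1) ^ 3 ∈ I := Ideal.subset_span (Or.inr rfl)
  have hC3 : (C (3:ℂ) : MvPolynomial (Fin 2) ℂ) = 3 := by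
    simp [map_ofNat]
  have hy4 : (X 1 : MvPolynomial (Fin 2) ℂ) ^ 4 ∈ I := by
    have key : (X 1 : MvPolynomial (Fin 2) ℂ) ^ 4 =
        C (3⁻¹:ℂ) * (X 0 * X 1 - X 1 * (X 0 - 3 * (X 1) ^ 3)) := by
      have h : (X 0 * X 1 - X 1 * (X 0 - 3 * (X 1) ^ 3) : MvPolynomial (Fin 2) ℂ)
          = C (3:ℂ) * (X 1) ^ 4 := by rw [hC3]; ring
      rw [h, ← mul_assoc, ← C_mul, inv_mul_cancel₀ (by norm_num : (3:ℂ) ≠ 0), C_1, one_mul]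
    rw [key]
    exact I.mul_mem_left _ (Ideal.sub_mem I ha (I.mul_mem_left _ hb))
  -- the root of X^4 in AdjoinRoot
  have hroot4 : (AdjoinRoot.root f4) ^ 4 = 0 := by
    rw [← AdjoinRoot.mk_X, ← map_pow, AdjoinRoot.mk_self]
  -- forward map
  set φ : MvPolynomial (Fin 2) ℂ →ₐ[ℂ] AdjoinRoot f4 :=
    aeval ![3 * (AdjoinRoot.root f4) ^ 3, AdjoinRoot.root f4] with hφ
  have hφ0 : φ (X 0) = 3 * (AdjoinRoot.root f4) ^ 3 := by simp [hφ]
  have hφ1 : φ (X 1) = AdjoinRoot.root f4 := by simp [hφ]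
  have hker : ∀ a ∈ I, φ a = 0 := by
    have hle : I ≤ RingHom.ker (φ : MvPolynomial (Fin 2) ℂ →+* AdjoinRoot f4) := by
      rw [Ideal.span_le]
      rintro p (rfl | rfl) <;> simp only [SetLike.mem_coe, RingHom.mem_ker, AlgHom.coe_toRingHom]
      · rw [map_mul, hφ0, hφ1, mul_assoc, ← pow_succ, hroot4, mul_zero]
      · rw [map_sub, hφ0, map_mul, map_pow, hφ1, map_ofNat, sub_self]
    exact fun a haI => hle haI
  set φbar : (MvPolynomial (Fin 2) ℂ ⧸ I) →ₐ[ℂ] AdjoinRoot f4 :=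
    Ideal.Quotient.liftₐ I φ hker with hφbar
  have hφbar_mk : ∀ p, φbar (Ideal.Quotient.mk I p) = φ p := fun p =>
    Ideal.Quotient.liftₐ_apply I φ hker p
  -- backward map
  have haev : (Polynomial.aeval (Ideal.Quotient.mk I (X 1))) f4 = 0 := by
    rw [show f4 = Polynomial.X ^ 4 from rfl, map_pow, Polynomial.aeval_X, ← map_pow,
      Ideal.Quotient.eq_zero_iff_mem]
    exact hy4
  set ψbar : AdjoinRoot f4 →ₐ[ℂ] (MvPolynomial (Fin 2) ℂ ⧸ I) :=
    AdjoinRoot.liftAlgHom f4 (Algebra.ofId ℂ _) (Ideal.Quotient.mk I (X 1)) haev with hψbar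
  have hψroot : ψbar (AdjoinRoot.root f4) = Ideal.Quotient.mk I (X 1) := by
    rw [hψbar]; exact AdjoinRoot.liftAlgHom_root f4 (Algebra.ofId ℂ _) (Ideal.Quotient.mk I (X 1)) haev
  -- equivalence
  have h1 : φbar.comp ψbar = AlgHom.id ℂ (AdjoinRoot f4) := by
    apply AdjoinRoot.algHom_ext
    simp [hψroot, hφbar_mk, hφ1]
  have h2 : ψbar.comp φbar = AlgHom.id ℂ (MvPolynomial (Fin 2) ℂ ⧸ I) := by
    apply Ideal.Quotient.algHom_ext
    apply MvPolynomial.algHom_ext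
    intro i
    fin_cases i
    · show ψbar (φbar (Ideal.Quotient.mk I (X 0))) = Ideal.Quotient.mk I (X 0)
      rw [hφbar_mk, hφ0, map_mul, map_pow, hψroot]
      rw [show (ψbar 3 : MvPolynomial (Fin 2) ℂ ⧸ I) = 3 from map_ofNat ψbar 3]
      rw [show ((3 : MvPolynomial (Fin 2) ℂ ⧸ I) * (Ideal.Quotient.mk I (X 1)) ^ 3)
          = Ideal.Quotient.mk I (3 * (X 1) ^ 3) from by rw [map_mul, map_pow, map_ofNat]]
      rw [Ideal.Quotient.mk_eq_mk_iff_sub_mem]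
      have := I.neg_mem hb
      rwa [neg_sub] at this
    · show ψbar (φbar (Ideal.Quotient.mk I (X 1))) = Ideal.Quotient.mk I (X 1)
      rw [hφbar_mk, hφ1, hψroot]
  set e : (MvPolynomial (Fin 2) ℂ ⧸ I) ≃ₐ[ℂ] AdjoinRoot f4 :=
    AlgEquiv.ofAlgHom φbar ψbar h1 h2 with he
  -- power basis
  set pb : PowerBasis ℂ (AdjoinRoot f4) := AdjoinRoot.powerBasis' f4_monic with hpb
  have hdim : pb.dim = 4 := by simp [hpb]
  set B : Module.Basis (Fin 4) ℂ (MvPolynomial (Fin 2) ℂ ⧸ I) :=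
    (pb.basis.map e.symm.toLinearEquiv).reindex (finCongr hdim) with hB
  have hBi : ∀ i : Fin 4, B i = Ideal.Quotient.mk I ((X 1) ^ (i : ℕ)) := by
    intro i
    rw [hB, Module.Basis.reindex_apply, Module.Basis.map_apply]
    have : pb.basis ((finCongr hdim).symm i) = (AdjoinRoot.root f4) ^ (i : ℕ) := by
      rw [pb.basis_eq_pow]
      simp [hpb]
    rw [this, AlgEquiv.toLinearEquiv_apply]
    apply e.injective
    rw [AlgEquiv.apply_symm_apply]
    show _ = φbar (Ideal.Quotient.mk I ((X 1) ^ (i : ℕ)))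
    rw [hφbar_mk, map_pow, hφ1]
  exact ⟨⟨B, hBi⟩, by rw [Module.finrank_eq_card_basis B, Fintype.card_fin]⟩
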